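/- arXiv:1206.4968 — 2 statements merged into one kernel-verified Lean document; each statement's English description precedes it below -/
import Mathlib

section
/- Let D ⊆ ℝⁿ be an open set, f : D → ℝⁿ a continuous vector field, and θ* a point in the closure of D. Suppose there exists a continuously differentiable function V : ℝⁿ → ℝ and a strictly increasing continuous function α : ℝ₊ → ℝ₊ with α(p) → ∞ as p → ∞ such that V(θ*) = 0, V(θ) ≥ α(‖θ − θ*‖) for all θ ∈ D \ {θ*}, and ∇V(θ)ᵀ f(θ) < 0 for all θ ∈ D \ {θ*}. Suppose further that for any 0 < r₁ ≤ r₂, any solution of θ' = f(θ) that remains in the annulus D_{r₁,r₂} = {θ ∈ D : r₁ ≤ ‖θ − θ*‖ ≤ r₂} for all t ≥ 0 eventually enters and stays in some compact subset E ⊆ D_{r₁,r₂}. Then θ* is globally asymptotically stable: it is Lyapunov stable and every solution starting in D converges to θ* as t → ∞. -/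
open Set Filter Topology Metric

/-- A solution of `θ' = f(θ)` on `[0, ∞)` staying in the open set `D`. -/
def IsSolIn {n : ℕ} (f : EuclideanSpace ℝ (Fin n) → EuclideanSpace ℝ (Fin n))
    (D : Set (EuclideanSpace ℝ (Fin n))) (θ : ℝ → EuclideanSpace ℝ (Fin n)) : Prop :=
  (∀ t : ℝ, 0 ≤ t → θ t ∈ D) ∧ ∀ t : ℝ, 0 ≤ t → HasDerivAt θ (f (θ t)) t

/-- **Extended Lyapunov stability method (global version).**
If there is a continuously differentiable Lyapunov function `V`, positive away from `θ*`
(bounded below by a strictly increasing radially unbounded `α` of the distance) and strictly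
decreasing along the vector field on `D \ {θ*}`, and if any solution remaining forever in an
annulus around `θ*` eventually stays in a compact subset of the annulus, then `θ*` is
globally asymptotically stable: it is Lyapunov stable and every solution starting in `D`
converges to `θ*`. -/
theorem extended_lyapunov_global {n : ℕ}
    (D : Set (EuclideanSpace ℝ (Fin n))) (hD : IsOpen D)
    (f : EuclideanSpace ℝ (Fin n) → EuclideanSpace ℝ (Fin n))
    (θstar : EuclideanSpace ℝ (Fin n)) (hθstar : θstar ∈ closure D)
    (hf : ContinuousOn f D)
    (V : EuclideanSpace ℝ (Fin n) → ℝ) (hV : ContDiff ℝ 1 V)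
    (α : ℝ → ℝ) (hαmono : StrictMonoOn α (Ici 0)) (hαcont : ContinuousOn α (Ici 0))
    (hαpos : ∀ p : ℝ, 0 < p → 0 < α p) (hαinf : Tendsto α atTop atTop)
    (hV0 : V θstar = 0)
    (hVpos : ∀ θ ∈ D \ {θstar}, α ‖θ - θstar‖ ≤ V θ)
    (hVdec : ∀ θ ∈ D \ {θstar}, fderiv ℝ V θ (f θ) < 0)
    (hA3 : ∀ r₁ r₂ : ℝ, 0 < r₁ → r₁ ≤ r₂ →
      ∀ θ : ℝ → EuclideanSpace ℝ (Fin n), IsSolIn f D θ →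
        (∀ t : ℝ, 0 ≤ t → θ t ∈ {x ∈ D | r₁ ≤ ‖x - θstar‖ ∧ ‖x - θstar‖ ≤ r₂}) →
        ∃ T : ℝ, 0 ≤ T ∧ ∃ E : Set (EuclideanSpace ℝ (Fin n)), IsCompact E ∧
          E ⊆ {x ∈ D | r₁ ≤ ‖x - θstar‖ ∧ ‖x - θstar‖ ≤ r₂} ∧
          ∀ t : ℝ, T ≤ t → θ t ∈ E) :
    -- Lyapunov stability
    (∀ ε : ℝ, 0 < ε → ∃ δ : ℝ, 0 < δ ∧
      ∀ θ : ℝ → EuclideanSpace ℝ (Fin n), IsSolIn f D θ →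
        θ 0 ∈ D ∩ closedBall θstar δ →
        ∀ t : ℝ, 0 ≤ t → θ t ∈ D ∩ closedBall θstar ε) ∧
    -- global attraction
    (∀ θ : ℝ → EuclideanSpace ℝ (Fin n), IsSolIn f D θ →
      Tendsto θ atTop (nhds θstar)) := by
  -- Basic consequences of the hypotheses
  have hVd : Differentiable ℝ V := hV.differentiable one_ne_zero
  have hVnn : ∀ x ∈ D, 0 ≤ V x := by
    intro x hx
    by_cases hxe : x = θstar
    · simp [hxe, hV0]
    · exact le_trans (hαpos _ (norm_sub_pos_iff.mpr hxe)).le (hVpos x ⟨hx, hxe⟩)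
  have hfd_le : ∀ x ∈ D, fderiv ℝ V x (f x) ≤ 0 := by
    intro x hx
    by_cases hxe : x = θstar
    · subst hxe
      have hmin : IsLocalMin V x := by
        filter_upwards [hD.mem_nhds hx] with y hy
        simpa [hV0] using hVnn y hy
      simp [hmin.fderiv_eq_zero]
    · exact (hVdec x ⟨hx, hxe⟩).le
  -- derivative of V along a solution
  have hderiv : ∀ (θ : ℝ → EuclideanSpace ℝ (Fin n)), IsSolIn f D θ → ∀ t : ℝ, 0 ≤ t →
      HasDerivAt (fun s => V (θ s)) (fderiv ℝ V (θ t) (f (θ t))) t := by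
    intro θ hs t ht
    exact (hVd (θ t)).hasFDerivAt.comp_hasDerivAt t (hs.2 t ht)
  -- V is nonincreasing along solutions
  have hanti : ∀ (θ : ℝ → EuclideanSpace ℝ (Fin n)), IsSolIn f D θ →
      AntitoneOn (fun t => V (θ t)) (Ici 0) := by
    intro θ hs
    apply antitoneOn_of_deriv_nonpos (convex_Ici 0)
    · intro t ht
      exact ((hderiv θ hs t ht).continuousAt).continuousWithinAt
    · intro t ht
      rw [interior_Ici] at ht
      exact ((hderiv θ hs t ht.le).differentiableAt).differentiableWithinAt
    · intro t ht
      rw [interior_Ici] at ht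
      rw [(hderiv θ hs t ht.le).deriv]
      exact hfd_le _ (hs.1 t ht.le)
  constructor
  · -- Lyapunov stability
    intro ε hε
    have hαε : 0 < α ε := hαpos ε hε
    have hVc : Tendsto V (𝓝 θstar) (𝓝 0) := by
      have := hVd.continuous.continuousAt (x := θstar)
      rwa [ContinuousAt, hV0] at this
    have hev : ∀ᶠ x in 𝓝 θstar, V x < α ε := hVc.eventually_lt_const hαε
    obtain ⟨δ, hδpos, hδ⟩ := Metric.eventually_nhds_iff.mp hev
    refine ⟨min (δ / 2) ε, by positivity, ?_⟩
    intro θ hs h0 t ht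
    refine ⟨hs.1 t ht, ?_⟩
    have hV0lt : V (θ 0) < α ε := by
      apply hδ
      have := h0.2
      rw [mem_closedBall] at this
      calc dist (θ 0) θstar ≤ min (δ / 2) ε := this
        _ ≤ δ / 2 := min_le_left _ _
        _ < δ := by linarith
    rw [mem_closedBall]
    by_contra hcon
    push_neg at hcon
    have hne : θ t ≠ θstar := by
      rw [← norm_sub_pos_iff, ← dist_eq_norm]
      linarith
    have h1 : α ε < α (dist (θ t) θstar) :=
      hαmono (mem_Ici.mpr hε.le) (mem_Ici.mpr dist_nonneg) hcon
    have h2 : α (dist (θ t) θstar) ≤ V (θ t) := by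
      rw [dist_eq_norm]
      exact hVpos _ ⟨hs.1 t ht, hne⟩
    have h3 : V (θ t) ≤ V (θ 0) :=
      hanti θ hs (mem_Ici.mpr le_rfl) (mem_Ici.mpr ht) ht
    linarith
  · -- global attraction
    intro θ hs
    set g : ℝ → ℝ := fun t => V (θ (max t 0)) with hg
    have hganti : Antitone g := by
      intro s t hst
      exact hanti θ hs (mem_Ici.mpr (le_max_right s 0)) (mem_Ici.mpr (le_max_right t 0))
        (max_le_max hst le_rfl)
    have hgnn : ∀ t, 0 ≤ g t := fun t => hVnn _ (hs.1 _ (le_max_right t 0))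
    have hgbdd : BddBelow (range g) := ⟨0, by rintro _ ⟨t, rfl⟩; exact hgnn t⟩
    set L := ⨅ t, g t with hLdef
    have hgt : Tendsto g atTop (𝓝 L) := tendsto_atTop_ciInf hganti hgbdd
    have hL0 : 0 ≤ L := le_ciInf hgnn
    have hLg : ∀ t, L ≤ g t := fun t => ciInf_le hgbdd t
    have hL : L = 0 := by
      by_contra hLne
      have hLpos : 0 < L := lt_of_le_of_ne hL0 (Ne.symm hLne)
      -- lower radius from continuity of V at θstar
      have hVc : Tendsto V (𝓝 θstar) (𝓝 0) := by
        have := hVd.continuous.continuousAt (x := θstar)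
        rwa [ContinuousAt, hV0] at this
      obtain ⟨r₁, hr₁pos, hr₁⟩ := Metric.eventually_nhds_iff.mp (hVc.eventually_lt_const hLpos)
      have hlow : ∀ t : ℝ, 0 ≤ t → r₁ ≤ ‖θ t - θstar‖ := by
        intro t ht
        by_contra hcon
        push_neg at hcon
        have h1 : V (θ t) < L := hr₁ (by rwa [dist_eq_norm])
        have h2 : L ≤ V (θ t) := by
          have := hLg t
          simpa [hg, max_eq_left ht] using this
        linarith
      -- upper radius from radial unboundedness
      obtain ⟨M, hM⟩ := (hαinf.eventually_gt_atTop (V (θ 0))).exists_forall_of_atTop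
      set r₂ := max M r₁ with hr₂def
      have hhigh : ∀ t : ℝ, 0 ≤ t → ‖θ t - θstar‖ ≤ r₂ := by
        intro t ht
        by_contra hcon
        push_neg at hcon
        have hne : θ t ≠ θstar := by
          rw [← norm_sub_pos_iff]
          have : (0:ℝ) < r₂ := lt_of_lt_of_le hr₁pos (le_max_right _ _)
          linarith
        have h1 : V (θ 0) < α ‖θ t - θstar‖ :=
          hM _ (le_trans (le_max_left _ _) hcon.le)
        have h2 : α ‖θ t - θstar‖ ≤ V (θ t) := hVpos _ ⟨hs.1 t ht, hne⟩
        have h3 : V (θ t) ≤ V (θ 0) :=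
          hanti θ hs (mem_Ici.mpr le_rfl) (mem_Ici.mpr ht) ht
        linarith
      -- the solution stays in the annulus forever
      obtain ⟨T, hT0, E, hEcomp, hEsub, hTE⟩ :=
        hA3 r₁ r₂ hr₁pos (le_max_right _ _) θ hs
          (fun t ht => ⟨hs.1 t ht, hlow t ht, hhigh t ht⟩)
      have hED : E ⊆ D := fun x hx => (hEsub hx).1
      -- max of the derivative on the compact set E
      have hφ : ContinuousOn (fun x => fderiv ℝ V x (f x)) D :=
        ContinuousOn.clm_apply (hV.continuous_fderiv one_ne_zero).continuousOn hf
      obtain ⟨x₀, hx₀E, hx₀max⟩ :=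
        hEcomp.exists_isMaxOn ⟨θ T, hTE T le_rfl⟩ (hφ.mono hED)
      set c : ℝ := -(fderiv ℝ V x₀ (f x₀)) with hcdef
      have hcpos : 0 < c := by
        have hx₀ne : x₀ ≠ θstar := by
          rw [← norm_sub_pos_iff]
          exact lt_of_lt_of_le hr₁pos (hEsub hx₀E).2.1
        have := hVdec x₀ ⟨hED hx₀E, hx₀ne⟩
        simp only [hcdef]
        linarith
      -- V(θ t) + c t is nonincreasing on [T, ∞)
      have hderiv2 : ∀ t : ℝ, T ≤ t →
          HasDerivAt (fun s => V (θ s) + c * s) (fderiv ℝ V (θ t) (f (θ t)) + c) t := by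
        intro t ht
        have h1 := hderiv θ hs t (hT0.trans ht)
        have h2 : HasDerivAt (fun s : ℝ => c * s) c t := by
          simpa using (hasDerivAt_id t).const_mul c
        exact h1.add h2
      have hanti2 : AntitoneOn (fun s => V (θ s) + c * s) (Ici T) := by
        apply antitoneOn_of_deriv_nonpos (convex_Ici T)
        · intro t ht
          exact ((hderiv2 t ht).continuousAt).continuousWithinAt
        · intro t ht
          rw [interior_Ici] at ht
          exact ((hderiv2 t ht.le).differentiableAt).differentiableWithinAt
        · intro t ht
          rw [interior_Ici] at ht
          rw [(hderiv2 t ht.le).deriv]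
          have hmax : fderiv ℝ V (θ t) (f (θ t)) ≤ fderiv ℝ V x₀ (f x₀) :=
            hx₀max (hTE t ht.le)
          simp only [hcdef]
          linarith
      -- derive the contradiction at a large time
      set t₁ : ℝ := T + (V (θ T) + 1) / c with ht₁def
      have hTt₁ : T ≤ t₁ := by
        have hVTnn : 0 ≤ V (θ T) := hVnn _ (hs.1 T hT0)
        have : 0 ≤ (V (θ T) + 1) / c := div_nonneg (by linarith) hcpos.le
        simp only [ht₁def]
        linarith
      have hb : V (θ t₁) + c * t₁ ≤ V (θ T) + c * T :=
        hanti2 (mem_Ici.mpr le_rfl) (mem_Ici.mpr hTt₁) hTt₁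
      have hVt₁nn : 0 ≤ V (θ t₁) := hVnn _ (hs.1 t₁ (hT0.trans hTt₁))
      have hct : c * t₁ = c * T + (V (θ T) + 1) := by
        rw [ht₁def, mul_add, mul_div_assoc', mul_div_cancel_left₀ _ hcpos.ne']
      rw [hct] at hb
      linarith
    -- conclude convergence
    rw [hL] at hgt
    rw [Metric.tendsto_atTop]
    intro ε hε
    have hαε : 0 < α ε := hαpos ε hε
    have hev : ∀ᶠ t in atTop, g t < α ε := hgt.eventually_lt_const hαε
    obtain ⟨N, hN⟩ := (hev.and (eventually_ge_atTop 0)).exists_forall_of_atTop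
    refine ⟨N, fun t ht => ?_⟩
    obtain ⟨h1, h2⟩ := hN t ht
    simp only [hg, max_eq_left h2] at h1
    by_cases hne : θ t = θstar
    · simp [hne, hε]
    · have h3 : α ‖θ t - θstar‖ ≤ V (θ t) := hVpos _ ⟨hs.1 t h2, hne⟩
      rw [dist_eq_norm]
      by_contra hcon
      push_neg at hcon
      have : α ε ≤ α ‖θ t - θstar‖ :=
        hαmono.monotoneOn (mem_Ici.mpr hε.le) (mem_Ici.mpr (norm_nonneg _)) hcon
      linarith
end

section
/- Consider the planar ODE dθ₁/dt = −θ₁/√(θ₁² + θ₂²), dθ₂/dt = −θ₂ on the domain D = ℝ × ℝ₊ (so the vector field is defined away from the origin). Then along any solution, |θ₁(t)| and θ₂(t) are monotonically non-increasing and converge to 0, so the origin (0,0) ∈ ∂D is globally asymptotically stable; however, lim_{θ→(0,0)} of the vector field does not exist. -/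
open Set Filter Topology Metric

/-- The planar vector field `F(θ₁,θ₂) = (−θ₁/√(θ₁²+θ₂²), −θ₂)`. -/
noncomputable def planarField (p : ℝ × ℝ) : ℝ × ℝ :=
  (-p.1 / Real.sqrt (p.1 ^ 2 + p.2 ^ 2), -p.2)

/-- The domain `D = ℝ × ℝ₊`. -/
def upperHalf : Set (ℝ × ℝ) := {p : ℝ × ℝ | 0 < p.2}

/-- A solution of the planar ODE on `[0, ∞)` staying in `D`. -/
def IsPlanarSol (θ : ℝ → ℝ × ℝ) : Prop :=
  (∀ t : ℝ, 0 ≤ t → θ t ∈ upperHalf) ∧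
    ∀ t : ℝ, 0 ≤ t → HasDerivAt θ (planarField (θ t)) t

lemma antitone_aux {f g : ℝ → ℝ}
    (hd : ∀ t ∈ Ici (0:ℝ), HasDerivAt f (g t) t)
    (hg : ∀ t ∈ Ici (0:ℝ), g t ≤ 0) : AntitoneOn f (Ici 0) := by
  apply antitoneOn_of_deriv_nonpos (convex_Ici 0)
  · exact fun t ht => (hd t ht).continuousAt.continuousWithinAt
  · intro t ht
    rw [interior_Ici] at ht
    exact (hd t (mem_Ici.2 (le_of_lt ht))).differentiableAt.differentiableWithinAt
  · intro t ht
    rw [interior_Ici] at ht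
    rw [(hd t (mem_Ici.2 (le_of_lt ht))).deriv]
    exact hg t (mem_Ici.2 (le_of_lt ht))

lemma sol_facts (θ : ℝ → ℝ × ℝ) (hθ : IsPlanarSol θ) :
    AntitoneOn (fun t => |(θ t).1|) (Ici (0:ℝ)) ∧
    AntitoneOn (fun t => (θ t).2) (Ici (0:ℝ)) ∧
    Tendsto (fun t => |(θ t).1|) atTop (nhds 0) ∧
    Tendsto (fun t => (θ t).2) atTop (nhds 0) := by
  obtain ⟨hpos, hder⟩ := hθ
  set x : ℝ → ℝ := fun t => (θ t).1 with hxdef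
  set y : ℝ → ℝ := fun t => (θ t).2 with hydef
  have hy0 : ∀ t ∈ Ici (0:ℝ), 0 < y t := fun t ht => hpos t ht
  -- derivatives of components
  have hdx : ∀ t ∈ Ici (0:ℝ), HasDerivAt x (-(x t) / Real.sqrt (x t ^ 2 + y t ^ 2)) t := by
    intro t ht
    exact hasFDerivAt_fst.comp_hasDerivAt t (hder t ht)
  have hdy : ∀ t ∈ Ici (0:ℝ), HasDerivAt y (-(y t)) t := by
    intro t ht
    exact hasFDerivAt_snd.comp_hasDerivAt t (hder t ht)
  -- sqrt positive
  have hS : ∀ t ∈ Ici (0:ℝ), 0 < Real.sqrt (x t ^ 2 + y t ^ 2) := by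
    intro t ht
    have := hy0 t ht
    positivity
  -- y antitone
  have hyA : AntitoneOn y (Ici 0) :=
    antitone_aux hdy (fun t ht => neg_nonpos.2 (hy0 t ht).le)
  -- x^2 antitone
  have hdx2 : ∀ t ∈ Ici (0:ℝ), HasDerivAt (fun t => x t ^ 2)
      (2 * x t ^ 1 * (-(x t) / Real.sqrt (x t ^ 2 + y t ^ 2))) t := by
    intro t ht
    exact (hdx t ht).pow 2
  have hx2A : AntitoneOn (fun t => x t ^ 2) (Ici 0) := by
    apply antitone_aux hdx2
    intro t ht
    have hs := hS t ht
    have h1 : (0:ℝ) ≤ 2 * x t ^ 2 / Real.sqrt (x t ^ 2 + y t ^ 2) := by positivity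
    have heq : 2 * x t ^ 1 * (-(x t) / Real.sqrt (x t ^ 2 + y t ^ 2))
        = -(2 * x t ^ 2 / Real.sqrt (x t ^ 2 + y t ^ 2)) := by ring
    rw [heq]; linarith
  -- |x| antitone
  have hxA : AntitoneOn (fun t => |x t|) (Ici 0) := by
    intro s hs t ht hst
    have := hx2A hs ht hst
    simpa [Real.sqrt_sq_eq_abs] using Real.sqrt_le_sqrt this
  -- exponential bound for y
  have hyexp : ∀ t ∈ Ici (0:ℝ), y t ≤ y 0 * Real.exp (-t) := by
    have hA : AntitoneOn (fun t => y t * Real.exp t) (Ici 0) := by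
      apply antitone_aux (g := fun _ => 0)
      · intro t ht
        have := ((hdy t ht).mul (Real.hasDerivAt_exp t))
        exact this.congr_deriv (by show _ = (0:ℝ); ring)
      · intro t _; exact le_refl 0
    intro t ht
    have h := hA (self_mem_Ici) ht ht
    simp only [Real.exp_zero, mul_one] at h
    rw [Real.exp_neg, ← div_eq_mul_inv, le_div_iff₀ (Real.exp_pos t)]
    exact h
  -- bound on sqrt
  set R := Real.sqrt (x 0 ^ 2 + y 0 ^ 2) with hRdef
  have hR : 0 < R := hS 0 self_mem_Ici
  have hbound : ∀ t ∈ Ici (0:ℝ), Real.sqrt (x t ^ 2 + y t ^ 2) ≤ R := by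
    intro t ht
    apply Real.sqrt_le_sqrt
    have h1 : x t ^ 2 ≤ x 0 ^ 2 := hx2A self_mem_Ici ht ht
    have h2 : y t ≤ y 0 := hyA self_mem_Ici ht ht
    have h3 : 0 < y t := hy0 t ht
    nlinarith
  set k := 2 / R with hkdef
  have hk : 0 < k := by positivity
  -- exponential bound for x^2
  have hx2exp : ∀ t ∈ Ici (0:ℝ), x t ^ 2 ≤ x 0 ^ 2 * Real.exp (-(k * t)) := by
    have hA : AntitoneOn (fun t => x t ^ 2 * Real.exp (k * t)) (Ici 0) := by
      apply antitone_aux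
        (g := fun t => Real.exp (k * t) * (x t ^ 2 * (k - 2 / Real.sqrt (x t ^ 2 + y t ^ 2))))
      · intro t ht
        have he : HasDerivAt (fun t => Real.exp (k * t)) (Real.exp (k * t) * k) t := by
          have h0 : HasDerivAt (fun t : ℝ => k * t) k t := by
            simpa using (hasDerivAt_id t).const_mul k
          exact h0.exp
        exact ((hdx2 t ht).mul he).congr_deriv (by ring)
      · intro t ht
        have hs := hS t ht
        have hb := hbound t ht
        have h2 : k ≤ 2 / Real.sqrt (x t ^ 2 + y t ^ 2) := by
          rw [hkdef, div_le_div_iff₀ hR hs]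
          nlinarith
        have hE : (0:ℝ) < Real.exp (k * t) := Real.exp_pos _
        have hx2 : (0:ℝ) ≤ x t ^ 2 := sq_nonneg _
        exact mul_nonpos_of_nonneg_of_nonpos hE.le
          (mul_nonpos_of_nonneg_of_nonpos hx2 (by linarith))
    intro t ht
    have h := hA self_mem_Ici ht ht
    simp only [mul_zero, Real.exp_zero, mul_one] at h
    rw [Real.exp_neg, ← div_eq_mul_inv, le_div_iff₀ (Real.exp_pos _)]
    exact h
  -- convergence
  have hkm : Tendsto (fun t : ℝ => k * t) atTop atTop :=
    Tendsto.const_mul_atTop hk tendsto_id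
  have he0 : Tendsto (fun t => Real.exp (-(k * t))) atTop (nhds 0) :=
    Real.tendsto_exp_neg_atTop_nhds_zero.comp hkm
  have hx2T : Tendsto (fun t => x t ^ 2) atTop (nhds 0) := by
    have hb : Tendsto (fun t => x 0 ^ 2 * Real.exp (-(k * t))) atTop (nhds 0) := by
      have := he0.const_mul (x 0 ^ 2)
      simpa using this
    apply tendsto_of_tendsto_of_tendsto_of_le_of_le' tendsto_const_nhds hb
    · exact Eventually.of_forall fun t => sq_nonneg _
    · exact (eventually_ge_atTop 0).mono fun t ht => hx2exp t ht
  have hxabsT : Tendsto (fun t => |x t|) atTop (nhds 0) := by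
    have h := (Real.continuous_sqrt.tendsto 0).comp hx2T
    rw [Real.sqrt_zero] at h
    exact h.congr fun t => by simp [Function.comp, Real.sqrt_sq_eq_abs]
  have hyT : Tendsto y atTop (nhds 0) := by
    have hb : Tendsto (fun t => y 0 * Real.exp (-t)) atTop (nhds 0) := by
      have := Real.tendsto_exp_neg_atTop_nhds_zero.const_mul (y 0)
      simpa using this
    apply tendsto_of_tendsto_of_tendsto_of_le_of_le' tendsto_const_nhds hb
    · exact (eventually_ge_atTop 0).mono fun t ht => (hy0 t ht).le
    · exact (eventually_ge_atTop 0).mono fun t ht => hyexp t ht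
  exact ⟨hxA, hyA, hxabsT, hyT⟩
/-- For the ODE `θ₁' = −θ₁/√(θ₁²+θ₂²)`, `θ₂' = −θ₂` on `D = ℝ × ℝ₊`: along any solution
`|θ₁(t)|` and `θ₂(t)` are non-increasing and converge to `0`, the boundary point `(0,0)`
is globally asymptotically stable (Lyapunov stable and globally attractive), but the
vector field has no limit at `(0,0)`. -/
theorem planar_example :
    -- monotone decrease of |θ₁| and θ₂, and convergence to 0
    (∀ θ : ℝ → ℝ × ℝ, IsPlanarSol θ →
      AntitoneOn (fun t => |(θ t).1|) (Ici (0 : ℝ)) ∧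
      AntitoneOn (fun t => (θ t).2) (Ici (0 : ℝ)) ∧
      Tendsto (fun t => |(θ t).1|) atTop (nhds 0) ∧
      Tendsto (fun t => (θ t).2) atTop (nhds 0)) ∧
    -- Lyapunov stability of (0,0)
    (∀ ε : ℝ, 0 < ε → ∃ δ : ℝ, 0 < δ ∧
      ∀ θ : ℝ → ℝ × ℝ, IsPlanarSol θ →
        θ 0 ∈ upperHalf ∩ closedBall (0, 0) δ →
        ∀ t : ℝ, 0 ≤ t → θ t ∈ upperHalf ∩ closedBall (0, 0) ε) ∧
    -- global attraction to (0,0)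
    (∀ θ : ℝ → ℝ × ℝ, IsPlanarSol θ → Tendsto θ atTop (nhds ((0, 0) : ℝ × ℝ))) ∧
    -- the vector field has no limit at the origin
    ¬ ∃ L : ℝ × ℝ, Tendsto planarField (nhdsWithin (0, 0) upperHalf) (nhds L) := by
  refine ⟨sol_facts, ?_, ?_, ?_⟩
  · -- Lyapunov stability
    intro ε hε
    refine ⟨ε, hε, ?_⟩
    intro θ hθ ⟨hmemD, hball⟩ t ht
    obtain ⟨hxA, hyA, -, -⟩ := sol_facts θ hθ
    refine ⟨hθ.1 t ht, ?_⟩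
    have hy0 : 0 < (θ 0).2 := hθ.1 0 le_rfl
    have hyt : 0 < (θ t).2 := hθ.1 t ht
    have h1 : |(θ t).1| ≤ |(θ 0).1| := hxA self_mem_Ici ht ht
    have h2 : (θ t).2 ≤ (θ 0).2 := hyA self_mem_Ici ht ht
    have hd0 : dist (θ 0) ((0,0) : ℝ × ℝ) ≤ ε := hball
    rw [mem_closedBall]
    rw [Prod.dist_eq] at hd0 ⊢
    simp only [Real.dist_eq, sub_zero] at hd0 ⊢
    rw [abs_of_pos hyt]
    rw [abs_of_pos hy0] at hd0
    exact max_le (le_trans h1 (le_trans (le_max_left _ _) hd0))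
      (le_trans h2 (le_trans (le_max_right _ _) hd0))
  · -- global attraction
    intro θ hθ
    obtain ⟨-, -, hxT, hyT⟩ := sol_facts θ hθ
    have hx : Tendsto (fun t => (θ t).1) atTop (nhds 0) :=
      (tendsto_zero_iff_abs_tendsto_zero _).2 hxT
    have h := hx.prodMk_nhds hyT
    exact h.congr fun t => rfl
  · -- no limit
    rintro ⟨L, hL⟩
    set s : ℕ → ℝ := fun n => (n + 1 : ℝ)⁻¹ with hsdef
    have hs_pos : ∀ n : ℕ, 0 < s n := fun n => by positivity
    have hsT : Tendsto s atTop (nhds 0) := by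
      exact tendsto_one_div_add_atTop_nhds_zero_nat.congr (fun n => one_div _)
    -- first sequence: a n = (s n, s n ^ 2)
    have haT : Tendsto (fun n => ((s n, s n ^ 2) : ℝ × ℝ)) atTop
        (nhdsWithin ((0,0) : ℝ × ℝ) upperHalf) := by
      apply tendsto_nhdsWithin_of_tendsto_nhds_of_eventually_within
      · have h2 : Tendsto (fun n => s n ^ 2) atTop (nhds 0) := by
          simpa using hsT.pow 2
        simpa using hsT.prodMk_nhds h2
      · exact Eventually.of_forall fun n => by
          simp only [upperHalf, mem_setOf_eq]
          positivity
    -- second sequence: b n = (0, s n)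
    have hbT : Tendsto (fun n => ((0, s n) : ℝ × ℝ)) atTop
        (nhdsWithin ((0,0) : ℝ × ℝ) upperHalf) := by
      apply tendsto_nhdsWithin_of_tendsto_nhds_of_eventually_within
      · simpa using tendsto_const_nhds.prodMk_nhds hsT
      · exact Eventually.of_forall fun n => hs_pos n
    have hFa := hL.comp haT
    have hFb := hL.comp hbT
    -- compute F along b
    have hFb' : Tendsto (fun n => planarField (0, s n)) atTop (nhds ((0,0) : ℝ × ℝ)) := by
      have : ∀ n, planarField ((0, s n) : ℝ × ℝ) = (0, -(s n)) := by
        intro n; simp [planarField]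
      simp only [this]
      have := hsT.neg
      rw [neg_zero] at this
      simpa using tendsto_const_nhds.prodMk_nhds this
    have hL0 : L = ((0,0) : ℝ × ℝ) := tendsto_nhds_unique hFb hFb'
    -- compute F along a
    have hcomp : ∀ n, (planarField ((s n, s n ^ 2) : ℝ × ℝ)).1
        = -(1 / Real.sqrt (1 + (s n) ^ 2)) := by
      intro n
      have hpos := hs_pos n
      have hsq : Real.sqrt (s n ^ 2 + (s n ^ 2) ^ 2) = s n * Real.sqrt (1 + s n ^ 2) := by
        have h1 : s n ^ 2 + (s n ^ 2) ^ 2 = s n ^ 2 * (1 + s n ^ 2) := by ring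
        rw [h1, Real.sqrt_mul (sq_nonneg _), Real.sqrt_sq hpos.le]
      have hrt : 0 < Real.sqrt (1 + s n ^ 2) := by positivity
      simp only [planarField, hsq]
      field_simp
    have hFa1 : Tendsto (fun n => (planarField ((s n, s n ^ 2) : ℝ × ℝ)).1) atTop
        (nhds L.1) := (continuous_fst.tendsto L).comp hFa
    have hlim : Tendsto (fun n => -(1 / Real.sqrt (1 + (s n) ^ 2))) atTop
        (nhds (-1 : ℝ)) := by
      have h1 : Tendsto (fun n => (1 : ℝ) + s n ^ 2) atTop (nhds 1) := by
        have h := (tendsto_const_nhds (x := (1:ℝ))).add (hsT.pow 2)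
        simpa using h
      have h2 : Tendsto (fun n => Real.sqrt (1 + s n ^ 2)) atTop (nhds 1) := by
        have := (Real.continuous_sqrt.tendsto 1).comp h1
        rwa [Real.sqrt_one] at this
      have h3 := (tendsto_const_nhds (x := (1:ℝ))).div h2 one_ne_zero
      simpa using h3.neg
    have := tendsto_nhds_unique (hFa1.congr hcomp) hlim
    rw [hL0] at this
    norm_num at this
end
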